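/- Let n ≥ 4 and let A₁, …, Aₙ be points in ℝ^m, with A_{n+1} = A₁. For i < j let M_{ij} denote the midpoint of segment A_iA_j, and let c_{ij} = ∑_{r=0}^{2} (−1)^{r+1} C(n−j+i−1, 2−r)·C(j−i−1, r). Then C(n−2, 2) ∑_{i=1}^{n} |A_i A_{i+1}|² = ∑_{1≤i<j≤n, 1<j−i<n−1} c_{ij} |A_i A_j|² + 4 ∑_{1≤i<j<k<l≤n} |M_{ik} M_{jl}|². -/
import Mathlib

open Finset

lemma gauss_Icc (a b : ℕ) : ∑ x ∈ Icc a b, (b - x) = (b+1-a).choose 2 := by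
  rw [Nat.choose_two_right, ← Finset.sum_range_id, ← Finset.Ico_add_one_right_eq_Icc, Finset.sum_Ico_eq_sum_range]
  rcases le_or_gt a (b+1) with h | h
  · conv_rhs => rw [← Finset.sum_range_reflect]
    apply Finset.sum_congr rfl
    intro x hx
    simp only [Finset.mem_range] at hx
    omega
  · rw [show b + 1 - a = 0 by omega]
    simp

lemma count_single (n a b : ℕ) (ha : 1 ≤ a) (hb : b ≤ n) :
    ∑ x ∈ Icc 1 n, (if a ≤ x ∧ x ≤ b then (1:ℝ) else 0) = ((b+1-a : ℕ) : ℝ) := by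
  rw [Finset.sum_boole]
  rw [show (Icc 1 n).filter (fun x => a ≤ x ∧ x ≤ b) = Icc a b from by
    ext x; simp only [Finset.mem_filter, Finset.mem_Icc]; omega]
  rw [Nat.card_Icc]

lemma count_pairs (n a b : ℕ) (ha : 1 ≤ a) (hb : b ≤ n) :
    ∑ x ∈ Icc 1 n, ∑ y ∈ Icc 1 n, (if a ≤ x ∧ x < y ∧ y ≤ b then (1:ℝ) else 0)
      = (((b+1-a).choose 2 : ℕ) : ℝ) := by
  have inner : ∀ x ∈ Icc 1 n, (∑ y ∈ Icc 1 n, (if a ≤ x ∧ x < y ∧ y ≤ b then (1:ℝ) else 0))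
      = if a ≤ x ∧ x ≤ n then ((b - x : ℕ) : ℝ) else 0 := by
    intro x hx
    simp only [Finset.mem_Icc] at hx
    by_cases hax : a ≤ x
    · simp only [hax, true_and, hx.2, if_true]
      rw [Finset.sum_boole]
      rw [show (Icc 1 n).filter (fun y => x < y ∧ y ≤ b) = Icc (x+1) b from by
        ext y; simp only [Finset.mem_filter, Finset.mem_Icc]; omega]
      rw [Nat.card_Icc]
      congr 1
      omega
    · simp [hax]
  rw [Finset.sum_congr rfl inner, ← Finset.sum_filter]
  rw [show (Icc 1 n).filter (fun x => a ≤ x ∧ x ≤ n) = Icc a n from by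
    ext x; simp only [Finset.mem_filter, Finset.mem_Icc]; omega]
  rw [← Nat.cast_sum]
  congr 1
  rw [← gauss_Icc a b]
  refine (Finset.sum_subset (Finset.Icc_subset_Icc_right hb) ?_).symm
  intro x hx hnx
  simp only [Finset.mem_Icc] at hx hnx
  omega

lemma sw1 (s : Finset ℕ) (f : ℕ→ℕ→ℕ→ℕ→ℝ) :
    ∑ i ∈ s, ∑ j ∈ s, ∑ k ∈ s, ∑ l ∈ s, f i j k l
      = ∑ j ∈ s, ∑ i ∈ s, ∑ k ∈ s, ∑ l ∈ s, f i j k l := Finset.sum_comm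

lemma sw2 (s : Finset ℕ) (f : ℕ→ℕ→ℕ→ℕ→ℝ) :
    ∑ i ∈ s, ∑ j ∈ s, ∑ k ∈ s, ∑ l ∈ s, f i j k l
      = ∑ i ∈ s, ∑ k ∈ s, ∑ j ∈ s, ∑ l ∈ s, f i j k l :=
  Finset.sum_congr rfl fun _ _ => Finset.sum_comm

lemma sw3 (s : Finset ℕ) (f : ℕ→ℕ→ℕ→ℕ→ℝ) :
    ∑ i ∈ s, ∑ j ∈ s, ∑ k ∈ s, ∑ l ∈ s, f i j k l
      = ∑ i ∈ s, ∑ j ∈ s, ∑ l ∈ s, ∑ k ∈ s, f i j k l :=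
  Finset.sum_congr rfl fun _ _ => Finset.sum_congr rfl fun _ _ => Finset.sum_comm

lemma sum2_ite_const (s : Finset ℕ) (c : ℕ → ℕ → Prop) [∀ x y, Decidable (c x y)] (v : ℝ) :
    (∑ x ∈ s, ∑ y ∈ s, if c x y then v else 0)
      = v * ∑ x ∈ s, ∑ y ∈ s, if c x y then (1:ℝ) else 0 := by
  simp only [Finset.mul_sum, mul_ite, mul_one, mul_zero]

lemma sum2_ite_congr (s : Finset ℕ) (c1 c2 : ℕ → ℕ → Prop) [∀ x y, Decidable (c1 x y)]
    [∀ x y, Decidable (c2 x y)] (h : ∀ x ∈ s, ∀ y ∈ s, (c1 x y ↔ c2 x y)) (v : ℝ) :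
    (∑ x ∈ s, ∑ y ∈ s, if c1 x y then v else 0)
      = ∑ x ∈ s, ∑ y ∈ s, if c2 x y then v else 0 :=
  Finset.sum_congr rfl fun x hx => Finset.sum_congr rfl fun y hy =>
    if_congr (h x hx y hy) rfl rfl

lemma count_prod (s : Finset ℕ) (P Q : ℕ → Prop) [DecidablePred P] [DecidablePred Q] :
    (∑ x ∈ s, ∑ y ∈ s, if P x ∧ Q y then (1:ℝ) else 0)
      = (∑ x ∈ s, if P x then (1:ℝ) else 0) * (∑ y ∈ s, if Q y then (1:ℝ) else 0) := by
  rw [Finset.sum_mul_sum]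
  apply Finset.sum_congr rfl
  intro x _
  apply Finset.sum_congr rfl
  intro y _
  split_ifs with h1 h2 h3 <;> simp_all

lemma sum1_ite_congr (s : Finset ℕ) (c1 c2 : ℕ → Prop) [DecidablePred c1]
    [DecidablePred c2] (h : ∀ x ∈ s, (c1 x ↔ c2 x)) (v : ℝ) :
    (∑ x ∈ s, if c1 x then v else 0) = ∑ x ∈ s, if c2 x then v else 0 :=
  Finset.sum_congr rfl fun x hx => if_congr (h x hx) rfl rfl

lemma role1 (n : ℕ) (e : ℕ→ℕ→ℝ) :
    (∑ i ∈ Icc 1 n, ∑ j ∈ Icc 1 n, ∑ k ∈ Icc 1 n, ∑ l ∈ Icc 1 n,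
      if i<j ∧ j<k ∧ k<l then e i j else 0)
    = ∑ p ∈ Icc 1 n, ∑ q ∈ Icc 1 n,
        if p < q then (((n-q).choose 2 : ℕ) : ℝ) * e p q else 0 := by
  apply Finset.sum_congr rfl; intro p hp
  apply Finset.sum_congr rfl; intro q hq
  simp only [Finset.mem_Icc] at hp hq
  by_cases hpq : p < q
  · rw [if_pos hpq]
    simp only [hpq, true_and]
    rw [sum2_ite_const, sum2_ite_congr (Icc 1 n) _ (fun k l => q+1 ≤ k ∧ k < l ∧ l ≤ n)
      (by intro x hx y hy; simp only [Finset.mem_Icc] at hx hy; omega),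
      count_pairs n (q+1) n (by omega) le_rfl, show n+1-(q+1) = n - q by omega, mul_comm]
  · rw [if_neg hpq]
    apply Finset.sum_eq_zero; intro k _
    apply Finset.sum_eq_zero; intro l _
    rw [if_neg (by omega)]

lemma role2 (n : ℕ) (e : ℕ→ℕ→ℝ) :
    (∑ i ∈ Icc 1 n, ∑ j ∈ Icc 1 n, ∑ k ∈ Icc 1 n, ∑ l ∈ Icc 1 n,
      if i<j ∧ j<k ∧ k<l then e k l else 0)
    = ∑ p ∈ Icc 1 n, ∑ q ∈ Icc 1 n,
        if p < q then (((p-1).choose 2 : ℕ) : ℝ) * e p q else 0 := by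
  rw [sw2, sw1, sw3, sw2]
  apply Finset.sum_congr rfl; intro p hp
  apply Finset.sum_congr rfl; intro q hq
  simp only [Finset.mem_Icc] at hp hq
  by_cases hpq : p < q
  · rw [if_pos hpq]
    simp only [hpq, and_true]
    rw [sum2_ite_const, sum2_ite_congr (Icc 1 n) _ (fun i j => 1 ≤ i ∧ i < j ∧ j ≤ p-1)
      (by intro x hx y hy; simp only [Finset.mem_Icc] at hx hy; omega),
      count_pairs n 1 (p-1) le_rfl (by omega), show p-1+1-1 = p - 1 by omega, mul_comm]
  · rw [if_neg hpq]
    apply Finset.sum_eq_zero; intro k _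
    apply Finset.sum_eq_zero; intro l _
    rw [if_neg (by omega)]

lemma role3 (n : ℕ) (e : ℕ→ℕ→ℝ) :
    (∑ i ∈ Icc 1 n, ∑ j ∈ Icc 1 n, ∑ k ∈ Icc 1 n, ∑ l ∈ Icc 1 n,
      if i<j ∧ j<k ∧ k<l then e i l else 0)
    = ∑ p ∈ Icc 1 n, ∑ q ∈ Icc 1 n,
        if p < q then (((q-p-1).choose 2 : ℕ) : ℝ) * e p q else 0 := by
  rw [sw3, sw2]
  apply Finset.sum_congr rfl; intro p hp
  apply Finset.sum_congr rfl; intro q hq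
  simp only [Finset.mem_Icc] at hp hq
  by_cases hpq : p < q
  · rw [if_pos hpq]
    rw [sum2_ite_const, sum2_ite_congr (Icc 1 n) _ (fun j k => p+1 ≤ j ∧ j < k ∧ k ≤ q-1)
      (by intro x hx y hy; simp only [Finset.mem_Icc] at hx hy; omega),
      count_pairs n (p+1) (q-1) (by omega) (by omega),
      show q-1+1-(p+1) = q-p-1 by omega, mul_comm]
  · rw [if_neg hpq]
    apply Finset.sum_eq_zero; intro k _
    apply Finset.sum_eq_zero; intro l _
    rw [if_neg (by omega)]

lemma role4 (n : ℕ) (e : ℕ→ℕ→ℝ) :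
    (∑ i ∈ Icc 1 n, ∑ j ∈ Icc 1 n, ∑ k ∈ Icc 1 n, ∑ l ∈ Icc 1 n,
      if i<j ∧ j<k ∧ k<l then e j k else 0)
    = ∑ p ∈ Icc 1 n, ∑ q ∈ Icc 1 n,
        if p < q then (((p-1 : ℕ) : ℝ) * ((n-q : ℕ) : ℝ)) * e p q else 0 := by
  rw [sw1, sw2]
  apply Finset.sum_congr rfl; intro p hp
  apply Finset.sum_congr rfl; intro q hq
  simp only [Finset.mem_Icc] at hp hq
  by_cases hpq : p < q
  · rw [if_pos hpq]
    rw [sum2_ite_const, sum2_ite_congr (Icc 1 n) _ (fun i l => (i < p) ∧ (q < l))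
      (by intro x hx y hy; simp only [Finset.mem_Icc] at hx hy; omega),
      count_prod,
      sum1_ite_congr (Icc 1 n) _ (fun i => 1 ≤ i ∧ i ≤ p-1)
        (by intro x hx; simp only [Finset.mem_Icc] at hx; omega),
      count_single n 1 (p-1) le_rfl (by omega),
      sum1_ite_congr (Icc 1 n) _ (fun l => q+1 ≤ l ∧ l ≤ n)
        (by intro x hx; simp only [Finset.mem_Icc] at hx; omega),
      count_single n (q+1) n (by omega) le_rfl,
      show p-1+1-1 = p-1 by omega, show n+1-(q+1) = n-q by omega, mul_comm]
  · rw [if_neg hpq]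
    apply Finset.sum_eq_zero; intro k _
    apply Finset.sum_eq_zero; intro l _
    rw [if_neg (by omega)]

lemma role5 (n : ℕ) (e : ℕ→ℕ→ℝ) :
    (∑ i ∈ Icc 1 n, ∑ j ∈ Icc 1 n, ∑ k ∈ Icc 1 n, ∑ l ∈ Icc 1 n,
      if i<j ∧ j<k ∧ k<l then e i k else 0)
    = ∑ p ∈ Icc 1 n, ∑ q ∈ Icc 1 n,
        if p < q then (((q-p-1 : ℕ) : ℝ) * ((n-q : ℕ) : ℝ)) * e p q else 0 := by
  rw [sw2]
  apply Finset.sum_congr rfl; intro p hp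
  apply Finset.sum_congr rfl; intro q hq
  simp only [Finset.mem_Icc] at hp hq
  by_cases hpq : p < q
  · rw [if_pos hpq]
    rw [sum2_ite_const, sum2_ite_congr (Icc 1 n) _ (fun j l => (p < j ∧ j < q) ∧ (q < l))
      (by intro x hx y hy; simp only [Finset.mem_Icc] at hx hy; omega),
      count_prod,
      sum1_ite_congr (Icc 1 n) _ (fun j => p+1 ≤ j ∧ j ≤ q-1)
        (by intro x hx; simp only [Finset.mem_Icc] at hx; omega),
      count_single n (p+1) (q-1) (by omega) (by omega),
      sum1_ite_congr (Icc 1 n) _ (fun l => q+1 ≤ l ∧ l ≤ n)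
        (by intro x hx; simp only [Finset.mem_Icc] at hx; omega),
      count_single n (q+1) n (by omega) le_rfl,
      show q-1+1-(p+1) = q-p-1 by omega, show n+1-(q+1) = n-q by omega, mul_comm]
  · rw [if_neg hpq]
    apply Finset.sum_eq_zero; intro k _
    apply Finset.sum_eq_zero; intro l _
    rw [if_neg (by omega)]

lemma role6 (n : ℕ) (e : ℕ→ℕ→ℝ) :
    (∑ i ∈ Icc 1 n, ∑ j ∈ Icc 1 n, ∑ k ∈ Icc 1 n, ∑ l ∈ Icc 1 n,
      if i<j ∧ j<k ∧ k<l then e j l else 0)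
    = ∑ p ∈ Icc 1 n, ∑ q ∈ Icc 1 n,
        if p < q then (((p-1 : ℕ) : ℝ) * ((q-p-1 : ℕ) : ℝ)) * e p q else 0 := by
  rw [sw1, sw3, sw2]
  apply Finset.sum_congr rfl; intro p hp
  apply Finset.sum_congr rfl; intro q hq
  simp only [Finset.mem_Icc] at hp hq
  by_cases hpq : p < q
  · rw [if_pos hpq]
    rw [sum2_ite_const, sum2_ite_congr (Icc 1 n) _ (fun i k => (i < p) ∧ (p < k ∧ k < q))
      (by intro x hx y hy; simp only [Finset.mem_Icc] at hx hy; omega),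
      count_prod,
      sum1_ite_congr (Icc 1 n) _ (fun i => 1 ≤ i ∧ i ≤ p-1)
        (by intro x hx; simp only [Finset.mem_Icc] at hx; omega),
      count_single n 1 (p-1) le_rfl (by omega),
      sum1_ite_congr (Icc 1 n) _ (fun k => p+1 ≤ k ∧ k ≤ q-1)
        (by intro x hx; simp only [Finset.mem_Icc] at hx; omega),
      count_single n (p+1) (q-1) (by omega) (by omega),
      show p-1+1-1 = p-1 by omega, show q-1+1-(p+1) = q-p-1 by omega, mul_comm]
  · rw [if_neg hpq]
    apply Finset.sum_eq_zero; intro k _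
    apply Finset.sum_eq_zero; intro l _
    rw [if_neg (by omega)]

lemma dist_sq_coord {m : ℕ} (x y : EuclideanSpace ℝ (Fin m)) :
    dist x y ^ 2 = ∑ t, (x t - y t)^2 := by
  rw [EuclideanSpace.dist_eq, Real.sq_sqrt (by positivity)]
  simp [Real.dist_eq, sq_abs]

lemma mid_coord {m : ℕ} (a c : EuclideanSpace ℝ (Fin m)) (t : Fin m) :
    (midpoint ℝ a c) t = (a t + c t)/2 := by
  rw [midpoint_eq_smul_add]
  simp only [PiLp.smul_apply, PiLp.add_apply, smul_eq_mul, invOf_eq_inv]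
  ring

lemma four_point {m : ℕ} (a b c d : EuclideanSpace ℝ (Fin m)) :
    4 * dist (midpoint ℝ a c) (midpoint ℝ b d) ^ 2 =
      dist a b ^2 + dist c d ^2 + dist a d ^2 + dist b c ^2 - dist a c ^2 - dist b d ^2 := by
  simp only [dist_sq_coord]
  rw [Finset.mul_sum, ← Finset.sum_add_distrib, ← Finset.sum_add_distrib,
    ← Finset.sum_add_distrib, ← Finset.sum_sub_distrib, ← Finset.sum_sub_distrib]
  apply Finset.sum_congr rfl
  intro t _
  rw [mid_coord, mid_coord]
  ring

theorem generalized_euler_midpoints (m n : ℕ) (hn : 4 ≤ n)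
    (A : ℕ → EuclideanSpace ℝ (Fin m)) (hcyc : A (n + 1) = A 1) :
    (Nat.choose (n - 2) 2 : ℝ) * ∑ i ∈ Finset.Icc 1 n, dist (A i) (A (i + 1)) ^ 2 =
      (∑ i ∈ Finset.Icc 1 n, ∑ j ∈ Finset.Icc 1 n,
        if i < j ∧ 1 < j - i ∧ j - i < n - 1 then
          (∑ r ∈ Finset.range 3, (-1 : ℝ) ^ (r + 1) *
              Nat.choose (n - j + i - 1) (2 - r) * Nat.choose (j - i - 1) r) *
            dist (A i) (A j) ^ 2 else 0) +
      4 * ∑ i ∈ Finset.Icc 1 n, ∑ j ∈ Finset.Icc 1 n, ∑ k ∈ Finset.Icc 1 n,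
        ∑ l ∈ Finset.Icc 1 n,
          if i < j ∧ j < k ∧ k < l then
            dist (midpoint ℝ (A i) (A k)) (midpoint ℝ (A j) (A l)) ^ 2 else 0 := by
  classical
  have quad : 4 * (∑ i ∈ Finset.Icc 1 n, ∑ j ∈ Finset.Icc 1 n, ∑ k ∈ Finset.Icc 1 n,
        ∑ l ∈ Finset.Icc 1 n,
          if i < j ∧ j < k ∧ k < l then
            dist (midpoint ℝ (A i) (A k)) (midpoint ℝ (A j) (A l)) ^ 2 else 0)
      = ∑ p ∈ Finset.Icc 1 n, ∑ q ∈ Finset.Icc 1 n, if p < q then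
          ((((n-q).choose 2 : ℕ) : ℝ) + (((p-1).choose 2 : ℕ) : ℝ) + (((q-p-1).choose 2 : ℕ) : ℝ)
            + ((p-1 : ℕ) : ℝ) * ((n-q : ℕ) : ℝ) - ((q-p-1 : ℕ) : ℝ) * ((n-q : ℕ) : ℝ)
            - ((p-1 : ℕ) : ℝ) * ((q-p-1 : ℕ) : ℝ)) * dist (A p) (A q) ^ 2 else 0 := by
    simp only [Finset.mul_sum, mul_ite, mul_zero]
    have h4 : ∀ i j k l : ℕ,
        (if i < j ∧ j < k ∧ k < l then
            4 * dist (midpoint ℝ (A i) (A k)) (midpoint ℝ (A j) (A l)) ^ 2 else 0)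
        = (if i < j ∧ j < k ∧ k < l then dist (A i) (A j)^2 else 0)
          + (if i < j ∧ j < k ∧ k < l then dist (A k) (A l)^2 else 0)
          + (if i < j ∧ j < k ∧ k < l then dist (A i) (A l)^2 else 0)
          + (if i < j ∧ j < k ∧ k < l then dist (A j) (A k)^2 else 0)
          - (if i < j ∧ j < k ∧ k < l then dist (A i) (A k)^2 else 0)
          - (if i < j ∧ j < k ∧ k < l then dist (A j) (A l)^2 else 0) := by
      intro i j k l
      rw [four_point]
      split_ifs <;> ring
    simp only [h4, Finset.sum_add_distrib, Finset.sum_sub_distrib]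
    rw [role1 n (fun p q => dist (A p) (A q) ^ 2), role2 n (fun p q => dist (A p) (A q) ^ 2),
        role3 n (fun p q => dist (A p) (A q) ^ 2), role4 n (fun p q => dist (A p) (A q) ^ 2),
        role5 n (fun p q => dist (A p) (A q) ^ 2), role6 n (fun p q => dist (A p) (A q) ^ 2)]
    have merge : ∀ p q : ℕ,
        (if p < q then
          ((((n-q).choose 2 : ℕ) : ℝ) + (((p-1).choose 2 : ℕ) : ℝ) + (((q-p-1).choose 2 : ℕ) : ℝ)
            + ((p-1 : ℕ) : ℝ) * ((n-q : ℕ) : ℝ) - ((q-p-1 : ℕ) : ℝ) * ((n-q : ℕ) : ℝ)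
            - ((p-1 : ℕ) : ℝ) * ((q-p-1 : ℕ) : ℝ)) * dist (A p) (A q) ^ 2 else 0)
        = (if p < q then (((n-q).choose 2 : ℕ) : ℝ) * dist (A p) (A q) ^ 2 else 0)
          + (if p < q then (((p-1).choose 2 : ℕ) : ℝ) * dist (A p) (A q) ^ 2 else 0)
          + (if p < q then (((q-p-1).choose 2 : ℕ) : ℝ) * dist (A p) (A q) ^ 2 else 0)
          + (if p < q then (((p-1 : ℕ) : ℝ) * ((n-q : ℕ) : ℝ)) * dist (A p) (A q) ^ 2 else 0)
          - (if p < q then (((q-p-1 : ℕ) : ℝ) * ((n-q : ℕ) : ℝ)) * dist (A p) (A q) ^ 2 else 0)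
          - (if p < q then (((p-1 : ℕ) : ℝ) * ((q-p-1 : ℕ) : ℝ)) * dist (A p) (A q) ^ 2 else 0) := by
      intro p q
      split_ifs <;> ring
    simp only [merge, Finset.sum_add_distrib, Finset.sum_sub_distrib]
  rw [quad]
  have comb : (∑ i ∈ Finset.Icc 1 n, ∑ j ∈ Finset.Icc 1 n,
        if i < j ∧ 1 < j - i ∧ j - i < n - 1 then
          (∑ r ∈ Finset.range 3, (-1 : ℝ) ^ (r + 1) *
              Nat.choose (n - j + i - 1) (2 - r) * Nat.choose (j - i - 1) r) *
            dist (A i) (A j) ^ 2 else 0) +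
      (∑ p ∈ Finset.Icc 1 n, ∑ q ∈ Finset.Icc 1 n, if p < q then
          ((((n-q).choose 2 : ℕ) : ℝ) + (((p-1).choose 2 : ℕ) : ℝ) + (((q-p-1).choose 2 : ℕ) : ℝ)
            + ((p-1 : ℕ) : ℝ) * ((n-q : ℕ) : ℝ) - ((q-p-1 : ℕ) : ℝ) * ((n-q : ℕ) : ℝ)
            - ((p-1 : ℕ) : ℝ) * ((q-p-1 : ℕ) : ℝ)) * dist (A p) (A q) ^ 2 else 0)
      = ∑ p ∈ Finset.Icc 1 n, ∑ q ∈ Finset.Icc 1 n,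
          ((if q = p+1 then (((n-2).choose 2 : ℕ) : ℝ) * dist (A p) (A q) ^ 2 else 0)
            + (if p = 1 ∧ q = n then (((n-2).choose 2 : ℕ) : ℝ) * dist (A p) (A q) ^ 2 else 0)) := by
    rw [← Finset.sum_add_distrib]
    apply Finset.sum_congr rfl; intro p hp
    rw [← Finset.sum_add_distrib]
    apply Finset.sum_congr rfl; intro q hq
    simp only [Finset.mem_Icc] at hp hq
    by_cases hpq : p < q
    · by_cases hg1 : q - p = 1
      · obtain ⟨a, ha⟩ : ∃ a, p = a + 1 := ⟨p-1, by omega⟩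
        obtain ⟨b, hb⟩ : ∃ b, n = q + b := ⟨n - q, by omega⟩
        rw [if_neg (by omega), if_pos hpq, if_pos (by omega : q = p + 1), if_neg (by omega)]
        rw [show n - q = b by omega, show p - 1 = a by omega, show q - p - 1 = 0 by omega,
          show n - 2 = a + b by omega]
        simp only [Nat.cast_choose_two]
        push_cast
        ring
      · by_cases hgm : q - p < n - 1
        · obtain ⟨a, ha⟩ : ∃ a, p = a + 1 := ⟨p-1, by omega⟩
          obtain ⟨e, he⟩ : ∃ e, q = p + (e + 2) := ⟨q - p - 2, by omega⟩
          obtain ⟨b, hb⟩ : ∃ b, n = q + b := ⟨n - q, by omega⟩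
          rw [if_pos ⟨hpq, by omega, hgm⟩, if_pos hpq, if_neg (by omega), if_neg (by omega)]
          rw [Finset.sum_range_succ, Finset.sum_range_succ, Finset.sum_range_one]
          rw [show n - q + p - 1 = a + b by omega, show q - p - 1 = e + 1 by omega,
            show n - q = b by omega, show p - 1 = a by omega]
          norm_num [Nat.choose_one_right, Nat.cast_choose_two]
          ring
        · have hp1 : p = 1 := by omega
          have hqn : q = n := by omega
          rw [if_neg (by omega), if_pos hpq, if_neg (by omega), if_pos ⟨hp1, hqn⟩]
          rw [show n - q = 0 by omega, show p - 1 = 0 by omega, show q - p - 1 = n - 2 by omega]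
          norm_num
    · rw [if_neg (by omega), if_neg hpq, if_neg (by omega), if_neg (by omega)]
  rw [comb]
  simp only [Finset.sum_add_distrib]
  have e1 : (∑ p ∈ Finset.Icc 1 n, ∑ q ∈ Finset.Icc 1 n,
        if q = p+1 then (((n-2).choose 2 : ℕ) : ℝ) * dist (A p) (A q) ^ 2 else 0)
      = (((n-2).choose 2 : ℕ) : ℝ) * ∑ i ∈ Finset.Icc 1 (n-1), dist (A i) (A (i+1)) ^ 2 := by
    rw [Finset.sum_congr rfl (fun p _ => Finset.sum_ite_eq' (Icc 1 n) (p+1)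
      (fun q => (((n-2).choose 2 : ℕ) : ℝ) * dist (A p) (A q) ^ 2))]
    rw [← Finset.sum_filter]
    rw [show (Icc 1 n).filter (fun p => p + 1 ∈ Icc 1 n) = Icc 1 (n-1) from by
      ext x; simp only [Finset.mem_filter, Finset.mem_Icc]; omega]
    rw [Finset.mul_sum]
  have e2 : (∑ p ∈ Finset.Icc 1 n, ∑ q ∈ Finset.Icc 1 n,
        if p = 1 ∧ q = n then (((n-2).choose 2 : ℕ) : ℝ) * dist (A p) (A q) ^ 2 else 0)
      = (((n-2).choose 2 : ℕ) : ℝ) * dist (A 1) (A n) ^ 2 := by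
    have h1 : ∀ p q : ℕ, (if p = 1 ∧ q = n then (((n-2).choose 2 : ℕ) : ℝ) * dist (A p) (A q) ^ 2 else 0)
        = if q = n then (if p = 1 then (((n-2).choose 2 : ℕ) : ℝ) * dist (A p) (A q) ^ 2 else 0) else 0 := by
      intro p q
      by_cases h1 : p = 1 <;> by_cases h2 : q = n <;> simp [h1, h2]
    simp only [h1]
    rw [Finset.sum_congr rfl (fun p _ => Finset.sum_ite_eq' (Icc 1 n) n
      (fun q => if p = 1 then (((n-2).choose 2 : ℕ) : ℝ) * dist (A p) (A q) ^ 2 else 0))]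
    have hnmem : n ∈ Icc 1 n := by simp only [Finset.mem_Icc]; omega
    simp only [hnmem, if_true]
    rw [Finset.sum_ite_eq' (Icc 1 n) 1
      (fun p => (((n-2).choose 2 : ℕ) : ℝ) * dist (A p) (A n) ^ 2)]
    have h1mem : (1:ℕ) ∈ Icc 1 n := by simp only [Finset.mem_Icc]; omega
    simp only [h1mem, if_true]
  rw [e1, e2]
  have split_last : ∑ i ∈ Finset.Icc 1 n, dist (A i) (A (i+1)) ^ 2
      = (∑ i ∈ Finset.Icc 1 (n-1), dist (A i) (A (i+1)) ^ 2) + dist (A 1) (A n) ^ 2 := by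
    have hins : Icc 1 n = insert n (Icc 1 (n-1)) := by
      ext x; simp only [Finset.mem_insert, Finset.mem_Icc]; omega
    rw [hins, Finset.sum_insert (by simp only [Finset.mem_Icc]; omega), hcyc,
      dist_comm (A n) (A 1)]
    ring
  rw [split_last]
  ring
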